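/- arXiv:1506.00966 — 2 statements merged into one kernel-verified Lean document; each statement's English description precedes it below -/
import Mathlib

section
/- There exists a constant C₀ ≥ 1 such that for every finite Borel measure μ on ℝ² and all radii 0 < r₁ ≤ r₂, one has ‖μ‖_{r₂} ≤ C₀ · ‖μ‖_{r₁}. -/
open Metric MeasureTheory
open scoped ENNReal

namespace RNormAux

abbrev E2 := EuclideanSpace ℝ (Fin 2)

lemma meas_ball (μ : Measure E2) [SFinite μ] (r : ℝ) :
    Measurable fun z : E2 => μ (ball z r) := by
  have hs : MeasurableSet {p : E2 × E2 | dist p.2 p.1 < r} :=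
    (isOpen_lt (continuous_snd.dist continuous_fst) continuous_const).measurableSet
  have := measurable_measure_prodMk_left (ν := μ) hs
  have heq : (fun z : E2 => μ (ball z r))
      = fun z => μ (Prod.mk z ⁻¹' {p : E2 × E2 | dist p.2 p.1 < r}) := by
    funext z; congr 1
  rw [heq]; exact this

lemma claimA (μ : Measure E2) [IsFiniteMeasure μ] {r₁ r₂ : ℝ} (h12 : r₁ ≤ r₂) (z : E2) :
    μ (ball z r₂) * volume (ball (0 : E2) r₁)
      ≤ ∫⁻ w in ball z (2 * r₂), μ (ball w r₁) := by
  set T : Set (E2 × E2) := {p | dist p.1 z < r₂ ∧ dist p.2 p.1 < r₁} with hTdef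
  set T' : Set (E2 × E2) := {p | dist p.2 z < 2 * r₂ ∧ dist p.1 p.2 < r₁} with hT'def
  have hTm : MeasurableSet T :=
    ((isOpen_lt (continuous_fst.dist continuous_const) continuous_const).inter
      (isOpen_lt (continuous_snd.dist continuous_fst) continuous_const)).measurableSet
  have hT'm : MeasurableSet T' :=
    ((isOpen_lt (continuous_snd.dist continuous_const) continuous_const).inter
      (isOpen_lt (continuous_fst.dist continuous_snd) continuous_const)).measurableSet
  have hsub : T ⊆ T' := by
    rintro ⟨x, w⟩ ⟨hx, hw⟩
    refine ⟨?_, by rwa [dist_comm]⟩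
    calc dist w z ≤ dist w x + dist x z := dist_triangle _ _ _
    _ < r₁ + r₂ := add_lt_add hw hx
    _ ≤ 2 * r₂ := by linarith
  have h1 : (μ.prod volume) T = μ (ball z r₂) * volume (ball (0 : E2) r₁) := by
    rw [Measure.prod_apply hTm]
    have key : ∀ x : E2, volume (Prod.mk x ⁻¹' T)
        = (ball z r₂).indicator (fun _ => volume (ball (0 : E2) r₁)) x := by
      intro x
      by_cases hx : x ∈ ball z r₂
      · have hpre : Prod.mk x ⁻¹' T = ball x r₁ := by
          ext w
          simp [hTdef, mem_ball.1 hx, mem_ball]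
        rw [hpre, Set.indicator_of_mem hx, Measure.addHaar_ball_center]
      · have hpre : Prod.mk x ⁻¹' T = ∅ := by
          ext w
          simp only [hTdef, Set.mem_preimage, Set.mem_setOf_eq, Set.mem_empty_iff_false,
            iff_false, not_and]
          intro h; exact absurd (mem_ball.2 h) hx
        rw [hpre, Set.indicator_of_notMem hx, measure_empty]
    simp_rw [key]
    rw [lintegral_indicator_const measurableSet_ball, mul_comm]
  have h2 : (μ.prod volume) T' = ∫⁻ w in ball z (2 * r₂), μ (ball w r₁) := by
    rw [Measure.prod_apply_symm hT'm]
    have key : ∀ w : E2, μ ((fun x => (x, w)) ⁻¹' T')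
        = (ball z (2 * r₂)).indicator (fun w => μ (ball w r₁)) w := by
      intro w
      by_cases hw : w ∈ ball z (2 * r₂)
      · have hpre : (fun x => (x, w)) ⁻¹' T' = ball w r₁ := by
          ext x
          simp [hT'def, mem_ball.1 hw, mem_ball]
        rw [hpre, Set.indicator_of_mem hw]
      · have hpre : (fun x => (x, w)) ⁻¹' T' = ∅ := by
          ext x
          simp only [hT'def, Set.mem_preimage, Set.mem_setOf_eq, Set.mem_empty_iff_false,
            iff_false, not_and]
          intro h; exact absurd (mem_ball.2 h) hw
        rw [hpre, Set.indicator_of_notMem hw, measure_empty]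
    simp_rw [key]
    rw [lintegral_indicator measurableSet_ball]
  calc μ (ball z r₂) * volume (ball (0 : E2) r₁) = (μ.prod volume) T := h1.symm
  _ ≤ (μ.prod volume) T' := measure_mono hsub
  _ = ∫⁻ w in ball z (2 * r₂), μ (ball w r₁) := h2


lemma claimB {α : Type*} [MeasurableSpace α] (ν : Measure α) {g : α → ℝ≥0∞}
    (hg : AEMeasurable g ν) :
    (∫⁻ a, g a ∂ν) ^ 2 ≤ ν Set.univ * ∫⁻ a, g a ^ 2 ∂ν := by
  have hpq : Real.HolderConjugate 2 2 := Real.HolderConjugate.two_two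
  have h := ENNReal.lintegral_mul_le_Lp_mul_Lq ν hpq hg (aemeasurable_const (b := (1 : ℝ≥0∞)))
  simp only [Pi.mul_apply, mul_one, one_mul, ENNReal.one_rpow, lintegral_const, lintegral_one] at h
  have h2 : (∫⁻ a, g a ∂ν) ^ 2
      ≤ ((∫⁻ a, g a ^ (2:ℝ) ∂ν) ^ (1/(2:ℝ)) * (ν Set.univ) ^ (1/(2:ℝ))) ^ 2 :=
    pow_le_pow_left₀ (zero_le) h 2
  calc (∫⁻ a, g a ∂ν) ^ 2
      ≤ ((∫⁻ a, g a ^ (2:ℝ) ∂ν) ^ (1/(2:ℝ)) * (ν Set.univ) ^ (1/(2:ℝ))) ^ 2 := h2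
  _ = ν Set.univ * ∫⁻ a, g a ^ 2 ∂ν := by
      rw [mul_pow, ← ENNReal.rpow_natCast (_ ^ (1/(2:ℝ))) 2,
        ← ENNReal.rpow_natCast ((ν Set.univ) ^ (1/(2:ℝ))) 2, ← ENNReal.rpow_mul,
        ← ENNReal.rpow_mul]
      norm_num
      rw [mul_comm]


lemma mainL (μ : Measure E2) [IsFiniteMeasure μ] {r₁ r₂ : ℝ} (h12 : r₁ ≤ r₂) :
    (∫⁻ z, μ (ball z r₂) ^ 2) * volume (ball (0 : E2) r₁) ^ 2
      ≤ volume (ball (0 : E2) (2 * r₂)) ^ 2 * ∫⁻ z, μ (ball z r₁) ^ 2 := by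
  set g : E2 → ℝ≥0∞ := fun w => μ (ball w r₁) with hg_def
  have hg : Measurable g := meas_ball μ r₁
  set v₁ := volume (ball (0 : E2) r₁) with hv₁
  set v₂ := volume (ball (0 : E2) (2 * r₂)) with hv₂
  have hv₂top : v₂ ≠ ∞ := measure_ball_lt_top.ne
  set F : E2 × E2 → ℝ≥0∞ :=
    fun p => Set.indicator {q : E2 × E2 | dist q.2 q.1 < 2 * r₂} (fun q => g q.2 ^ 2) p with hF_def
  have hSm : MeasurableSet {q : E2 × E2 | dist q.2 q.1 < 2 * r₂} :=
    (isOpen_lt (continuous_snd.dist continuous_fst) continuous_const).measurableSet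
  have hFm : Measurable F := (((hg.comp measurable_snd).pow_const 2).indicator hSm)
  have hF1 : ∀ z w : E2, F (z, w) = (ball z (2 * r₂)).indicator (fun w => g w ^ 2) w := by
    intro z w
    by_cases h : dist w z < 2 * r₂ <;>
      simp [hF_def, Set.indicator_apply, mem_ball, h]
  have hF2 : ∀ z w : E2, F (z, w) = (ball w (2 * r₂)).indicator (fun _ => g w ^ 2) z := by
    intro z w
    by_cases h : dist w z < 2 * r₂ <;>
      simp [hF_def, Set.indicator_apply, mem_ball, h, dist_comm z w]
  have pointwise : ∀ z : E2, μ (ball z r₂) ^ 2 * v₁ ^ 2 ≤ v₂ * ∫⁻ w, F (z, w) := by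
    intro z
    calc μ (ball z r₂) ^ 2 * v₁ ^ 2 = (μ (ball z r₂) * v₁) ^ 2 := (mul_pow _ _ 2).symm
    _ ≤ (∫⁻ w in ball z (2 * r₂), g w) ^ 2 :=
        pow_le_pow_left₀ (zero_le) (claimA μ h12 z) 2
    _ ≤ (volume.restrict (ball z (2 * r₂))) Set.univ
          * ∫⁻ w in ball z (2 * r₂), g w ^ 2 :=
        claimB _ hg.aemeasurable
    _ = v₂ * ∫⁻ w, F (z, w) := by
        rw [Measure.restrict_apply_univ, Measure.addHaar_ball_center]
        congr 1
        rw [← lintegral_indicator measurableSet_ball]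
        exact lintegral_congr fun w => (hF1 z w).symm
  have swap : ∫⁻ z, ∫⁻ w, F (z, w) = (∫⁻ w, g w ^ 2) * v₂ := by
    have hae : AEMeasurable (Function.uncurry fun z w => F (z, w))
        ((volume : Measure E2).prod (volume : Measure E2)) := by
      exact hFm.aemeasurable
    rw [lintegral_lintegral_swap hae]
    have : ∀ w : E2, ∫⁻ z, F (z, w) = g w ^ 2 * v₂ := by
      intro w
      calc ∫⁻ z, F (z, w) = ∫⁻ z, (ball w (2 * r₂)).indicator (fun _ => g w ^ 2) z :=
            lintegral_congr fun z => hF2 z w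
      _ = g w ^ 2 * volume (ball w (2 * r₂)) := lintegral_indicator_const measurableSet_ball _
      _ = g w ^ 2 * v₂ := by rw [Measure.addHaar_ball_center]
    simp_rw [this]
    exact lintegral_mul_const _ (hg.pow_const 2)
  calc (∫⁻ z, μ (ball z r₂) ^ 2) * v₁ ^ 2 = ∫⁻ z, μ (ball z r₂) ^ 2 * v₁ ^ 2 :=
        (lintegral_mul_const _ ((meas_ball μ r₂).pow_const 2)).symm
  _ ≤ ∫⁻ z, v₂ * ∫⁻ w, F (z, w) := lintegral_mono pointwise
  _ = v₂ * ∫⁻ z, ∫⁻ w, F (z, w) := lintegral_const_mul' _ _ hv₂top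
  _ = v₂ * ((∫⁻ w, g w ^ 2) * v₂) := by rw [swap]
  _ = v₂ ^ 2 * ∫⁻ z, μ (ball z r₁) ^ 2 := by ring


lemma lint_ball_lt_top (μ : Measure E2) [IsFiniteMeasure μ] (r : ℝ) :
    ∫⁻ z, μ (ball z r) < ∞ := by
  have hs : MeasurableSet {p : E2 × E2 | dist p.2 p.1 < r} :=
    (isOpen_lt (continuous_snd.dist continuous_fst) continuous_const).measurableSet
  have h1 : ∫⁻ z, μ (ball z r)
      = (volume.prod μ) {p : E2 × E2 | dist p.2 p.1 < r} := by
    rw [Measure.prod_apply hs]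
    exact lintegral_congr fun z => by congr 1
  have h2 : (volume.prod μ) {p : E2 × E2 | dist p.2 p.1 < r}
      = volume (ball (0 : E2) r) * μ Set.univ := by
    rw [Measure.prod_apply_symm hs]
    have key : ∀ x : E2,
        volume ((fun z => (z, x)) ⁻¹' {p : E2 × E2 | dist p.2 p.1 < r})
          = volume (ball (0 : E2) r) := by
      intro x
      have hpre : ((fun z => (z, x)) ⁻¹' {p : E2 × E2 | dist p.2 p.1 < r}) = ball x r := by
        ext z; simp [mem_ball, dist_comm]
      rw [hpre, Measure.addHaar_ball_center]
    simp_rw [key]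
    rw [lintegral_const]
  rw [h1, h2]
  exact ENNReal.mul_lt_top measure_ball_lt_top (measure_lt_top μ _)

lemma Lsq_lt_top (μ : Measure E2) [IsFiniteMeasure μ] (r : ℝ) :
    ∫⁻ z, μ (ball z r) ^ 2 < ∞ := by
  calc ∫⁻ z, μ (ball z r) ^ 2 ≤ ∫⁻ z, μ Set.univ * μ (ball z r) :=
        lintegral_mono fun z => by
          rw [pow_two]
          exact mul_le_mul_left (measure_mono (Set.subset_univ _)) _
  _ = μ Set.univ * ∫⁻ z, μ (ball z r) := lintegral_const_mul' _ _ (measure_ne_top μ _)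
  _ < ∞ := ENNReal.mul_lt_top (measure_lt_top μ _) (lint_ball_lt_top μ r)

lemma integral_eq (μ : Measure E2) [IsFiniteMeasure μ] (r : ℝ) :
    ∫ z, ((μ (ball z r)).toReal) ^ 2 = (∫⁻ z, μ (ball z r) ^ 2).toReal := by
  simp_rw [← ENNReal.toReal_pow]
  exact integral_toReal ((meas_ball μ r).pow_const 2).aemeasurable
    (ae_of_all _ fun z => ENNReal.pow_lt_top (measure_lt_top μ _))

end RNormAux

open RNormAux

/-- The scale-`r` norm of a measure `μ` on the plane:
`‖μ‖_r = ((1/r⁴) ∫ μ(B(z,r))² dz)^{1/2}`. -/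
noncomputable def rNorm (μ : Measure (EuclideanSpace ℝ (Fin 2))) (r : ℝ) : ℝ :=
  Real.sqrt ((1 / r ^ 4) * ∫ z : EuclideanSpace ℝ (Fin 2), ((μ (ball z r)).toReal) ^ 2)

/-- There is a constant `C₀ ≥ 1` such that for every finite Borel measure `μ`
on `ℝ²` and all radii `0 < r₁ ≤ r₂`, `‖μ‖_{r₂} ≤ C₀ ‖μ‖_{r₁}`. -/
theorem rNorm_scale_comparison :
    ∃ C₀ : ℝ, 1 ≤ C₀ ∧
      ∀ (μ : Measure (EuclideanSpace ℝ (Fin 2))), IsFiniteMeasure μ →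
        ∀ r₁ r₂ : ℝ, 0 < r₁ → r₁ ≤ r₂ →
          rNorm μ r₂ ≤ C₀ * rNorm μ r₁ := by
  refine ⟨4, by norm_num, ?_⟩
  intro μ hμ r₁ r₂ hr₁ h12
  have hr₂ : 0 < r₂ := lt_of_lt_of_le hr₁ h12
  set L₁ := ∫⁻ z, μ (ball z r₁) ^ 2 with hL₁def
  set L₂ := ∫⁻ z, μ (ball z r₂) ^ 2 with hL₂def
  have hL₁top : L₁ ≠ ∞ := (Lsq_lt_top μ r₁).ne
  have hL₂top : L₂ ≠ ∞ := (Lsq_lt_top μ r₂).ne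
  -- volume formulas
  set c := volume (ball (0 : E2) 1) with hcdef
  have hc0 : c ≠ 0 := (measure_ball_pos _ _ one_pos).ne'
  have hctop : c ≠ ∞ := measure_ball_lt_top.ne
  have hdim : Module.finrank ℝ E2 = 2 := finrank_euclideanSpace_fin
  have hv₁ : volume (ball (0 : E2) r₁) = ENNReal.ofReal (r₁ ^ 2) * c := by
    rw [Measure.addHaar_ball _ _ hr₁.le, hdim]
  have hv₂ : volume (ball (0 : E2) (2 * r₂)) = ENNReal.ofReal ((2 * r₂) ^ 2) * c := by
    rw [Measure.addHaar_ball _ _ (by linarith : (0:ℝ) ≤ 2 * r₂), hdim]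
  -- main inequality in ℝ≥0∞
  have hmain := mainL μ h12
  rw [hv₁, hv₂, ← hL₁def, ← hL₂def] at hmain
  have hmain' : L₂ * ENNReal.ofReal (r₁ ^ 2) ^ 2 ≤ ENNReal.ofReal ((2 * r₂) ^ 2) ^ 2 * L₁ := by
    have hc2 : c ^ 2 ≠ 0 := pow_ne_zero _ hc0
    have hc2top : c ^ 2 ≠ ∞ := ENNReal.pow_ne_top hctop
    rw [← ENNReal.mul_le_mul_iff_left hc2 hc2top]
    calc L₂ * ENNReal.ofReal (r₁ ^ 2) ^ 2 * c ^ 2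
        = L₂ * (ENNReal.ofReal (r₁ ^ 2) * c) ^ 2 := by ring
    _ ≤ (ENNReal.ofReal ((2 * r₂) ^ 2) * c) ^ 2 * L₁ := hmain
    _ = ENNReal.ofReal ((2 * r₂) ^ 2) ^ 2 * L₁ * c ^ 2 := by ring
  -- pass to real numbers
  have hRtop : ENNReal.ofReal ((2 * r₂) ^ 2) ^ 2 * L₁ ≠ ∞ :=
    ENNReal.mul_ne_top (ENNReal.pow_ne_top ENNReal.ofReal_ne_top) hL₁top
  have hreal := ENNReal.toReal_mono hRtop hmain'
  rw [ENNReal.toReal_mul, ENNReal.toReal_mul, ENNReal.toReal_pow, ENNReal.toReal_pow,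
    ENNReal.toReal_ofReal (sq_nonneg r₁), ENNReal.toReal_ofReal (sq_nonneg (2 * r₂))] at hreal
  -- hreal : L₂.toReal * (r₁ ^ 2) ^ 2 ≤ ((2 * r₂) ^ 2) ^ 2 * L₁.toReal
  have hr₁4 : (0:ℝ) < r₁ ^ 4 := by positivity
  have hr₂4 : (0:ℝ) < r₂ ^ 4 := by positivity
  have key : (1 / r₂ ^ 4) * L₂.toReal ≤ 16 * ((1 / r₁ ^ 4) * L₁.toReal) := by
    rw [div_mul_eq_mul_div, one_mul, div_le_iff₀ hr₂4]
    have h16 : 16 * ((1 / r₁ ^ 4) * L₁.toReal) * r₂ ^ 4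
        = (16 * r₂ ^ 4 * L₁.toReal) / r₁ ^ 4 := by
      field_simp
    rw [h16, le_div_iff₀ hr₁4]
    nlinarith [hreal]
  -- conclude via square roots
  have hI₁ := integral_eq μ r₁
  have hI₂ := integral_eq μ r₂
  unfold rNorm
  rw [hI₁, hI₂, ← hL₁def, ← hL₂def]
  calc Real.sqrt ((1 / r₂ ^ 4) * L₂.toReal)
      ≤ Real.sqrt (16 * ((1 / r₁ ^ 4) * L₁.toReal)) := Real.sqrt_le_sqrt key
  _ = 4 * Real.sqrt ((1 / r₁ ^ 4) * L₁.toReal) := by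
      rw [Real.sqrt_mul (by norm_num : (0:ℝ) ≤ 16)]
      congr 1
      rw [show (16:ℝ) = 4 ^ 2 by norm_num, Real.sqrt_sq (by norm_num : (0:ℝ) ≤ 4)]
end

section
/- Let v₁, v₂ be unit vectors of ℝ² with ⟨v₁, v₂⟩ ≥ 0, and let δ > 0 satisfy δ ≤ ‖v₁ − v₂‖ ≤ 3/2. Let A₁, A₂ be invertible linear maps of ℝ² with ‖A₁ − Id‖ ≤ 1/2, ‖A₂ − Id‖ ≤ 1/2 (operator norm), and ‖Id − A₁⁻¹A₂‖ ≤ δ/20. Then ‖A₁v₁/‖A₁v₁‖ − A₂v₂/‖A₂v₂‖‖ ≥ δ/80. -/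
open EuclideanSpace

/-- The Euclidean plane. -/
abbrev Plane := EuclideanSpace ℝ (Fin 2)

/-- Arithmetic core: lower bound for the distance of two rescaled unit vectors. -/
lemma sep_aux (N d a b c : ℝ) (hN : 0 ≤ N) (hd : 0 < d)
    (hNsq : N ^ 2 = a ^ 2 + b ^ 2 - 2 * a * b * c) (hd2 : d ^ 2 ≤ 2 - 2 * c)
    (hc : c ≤ 1) (ha1 : 2 / 3 ≤ a) (ha2 : a ≤ 2) (hb1 : 2 / 3 ≤ b) (hb2 : b ≤ 2) :
    2 / 3 * d ≤ N := by
  have hab : (4 : ℝ) / 9 ≤ a * b := by nlinarith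
  have h1c : (0 : ℝ) ≤ 1 - c := by linarith
  have key : (2 / 3 * d) ^ 2 ≤ N ^ 2 := by
    nlinarith [sq_nonneg (a - b),
      mul_nonneg (by linarith : (0 : ℝ) ≤ 2 * (a * b) - 8 / 9) h1c]
  by_contra h
  push_neg at h
  nlinarith [key]

/-- quantitative preservation of transversality by near-identity maps,
computational core of Claim 5.1. If `v₁, v₂` are unit vectors of `ℝ²` with `⟨v₁, v₂⟩ ≥ 0`
and `δ ≤ ‖v₁ − v₂‖ ≤ 3/2`, and `A₁, A₂` are invertible linear maps with
`‖Aᵢ − Id‖ ≤ 1/2` and `‖Id − A₁⁻¹A₂‖ ≤ δ/20`, then the normalized images stay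
`δ/80`-separated. -/
theorem normalized_images_separated
    (v₁ v₂ : Plane) (hv₁ : ‖v₁‖ = 1) (hv₂ : ‖v₂‖ = 1)
    (hinner : 0 ≤ (inner ℝ v₁ v₂ : ℝ))
    (δ : ℝ) (hδ : 0 < δ) (hlow : δ ≤ ‖v₁ - v₂‖) (hup : ‖v₁ - v₂‖ ≤ 3 / 2)
    (A₁ A₂ : Plane ≃L[ℝ] Plane)
    (hA₁ : ‖(A₁ : Plane →L[ℝ] Plane) - ContinuousLinearMap.id ℝ Plane‖ ≤ 1 / 2)
    (hA₂ : ‖(A₂ : Plane →L[ℝ] Plane) - ContinuousLinearMap.id ℝ Plane‖ ≤ 1 / 2)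
    (hA₁₂ : ‖ContinuousLinearMap.id ℝ Plane -
        ((A₂.trans A₁.symm : Plane ≃L[ℝ] Plane) : Plane →L[ℝ] Plane)‖ ≤ δ / 20) :
    δ / 80 ≤ ‖(‖A₁ v₁‖⁻¹ • (A₁ v₁ : Plane)) - ‖A₂ v₂‖⁻¹ • (A₂ v₂ : Plane)‖ := by
  -- notation
  set B : Plane ≃L[ℝ] Plane := A₂.trans A₁.symm with hBdef
  -- `‖A₁ v₁ - v₁‖ ≤ 1/2` and similarly for `A₂ v₂`
  have e₁ : ‖(A₁ v₁ : Plane) - v₁‖ ≤ 1 / 2 := by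
    have h := ((A₁ : Plane →L[ℝ] Plane) - ContinuousLinearMap.id ℝ Plane).le_opNorm v₁
    simp only [ContinuousLinearMap.sub_apply, ContinuousLinearMap.id_apply, hv₁, mul_one] at h
    calc ‖(A₁ v₁ : Plane) - v₁‖ ≤ ‖(A₁ : Plane →L[ℝ] Plane) - ContinuousLinearMap.id ℝ Plane‖ := h
      _ ≤ 1 / 2 := hA₁
  have e₂ : ‖(A₂ v₂ : Plane) - v₂‖ ≤ 1 / 2 := by
    have h := ((A₂ : Plane →L[ℝ] Plane) - ContinuousLinearMap.id ℝ Plane).le_opNorm v₂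
    simp only [ContinuousLinearMap.sub_apply, ContinuousLinearMap.id_apply, hv₂, mul_one] at h
    calc ‖(A₂ v₂ : Plane) - v₂‖ ≤ ‖(A₂ : Plane →L[ℝ] Plane) - ContinuousLinearMap.id ℝ Plane‖ := h
      _ ≤ 1 / 2 := hA₂
  -- bounds on the norms of the images
  have habs₁ := abs_norm_sub_norm_le (A₁ v₁ : Plane) v₁
  have habs₂ := abs_norm_sub_norm_le (A₂ v₂ : Plane) v₂
  rw [abs_le] at habs₁ habs₂
  have r₁lb : (1 : ℝ) / 2 ≤ ‖(A₁ v₁ : Plane)‖ := by rw [hv₁] at habs₁; linarith [habs₁.1, e₁]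
  have r₁ub : ‖(A₁ v₁ : Plane)‖ ≤ 3 / 2 := by rw [hv₁] at habs₁; linarith [habs₁.2, e₁]
  have r₂lb : (1 : ℝ) / 2 ≤ ‖(A₂ v₂ : Plane)‖ := by rw [hv₂] at habs₂; linarith [habs₂.1, e₂]
  have r₂ub : ‖(A₂ v₂ : Plane)‖ ≤ 3 / 2 := by rw [hv₂] at habs₂; linarith [habs₂.2, e₂]
  set a : ℝ := ‖(A₁ v₁ : Plane)‖⁻¹ with ha
  set b : ℝ := ‖(A₂ v₂ : Plane)‖⁻¹ with hb
  have r₁pos : (0 : ℝ) < ‖(A₁ v₁ : Plane)‖ := by linarith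
  have r₂pos : (0 : ℝ) < ‖(A₂ v₂ : Plane)‖ := by linarith
  have hma : a * ‖(A₁ v₁ : Plane)‖ = 1 := inv_mul_cancel₀ r₁pos.ne'
  have hmb : b * ‖(A₂ v₂ : Plane)‖ = 1 := inv_mul_cancel₀ r₂pos.ne'
  have hapos : (0 : ℝ) < a := inv_pos.mpr r₁pos
  have hbpos : (0 : ℝ) < b := inv_pos.mpr r₂pos
  have halb : (2 : ℝ) / 3 ≤ a := by
    rw [ha, show (2 : ℝ) / 3 = (3 / 2 : ℝ)⁻¹ by norm_num]
    exact inv_anti₀ r₁pos r₁ub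
  have haub : a ≤ 2 := by
    rw [ha, show (2 : ℝ) = ((1 : ℝ) / 2)⁻¹ by norm_num]
    exact inv_anti₀ (by norm_num) r₁lb
  have hblb : (2 : ℝ) / 3 ≤ b := by
    rw [hb, show (2 : ℝ) / 3 = (3 / 2 : ℝ)⁻¹ by norm_num]
    exact inv_anti₀ r₂pos r₂ub
  have hbub : b ≤ 2 := by
    rw [hb, show (2 : ℝ) = ((1 : ℝ) / 2)⁻¹ by norm_num]
    exact inv_anti₀ (by norm_num) r₂lb
  -- `B v₂` is close to `v₂`
  have hB : ‖v₂ - (B v₂ : Plane)‖ ≤ δ / 20 := by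
    have h := (ContinuousLinearMap.id ℝ Plane - (B : Plane →L[ℝ] Plane)).le_opNorm v₂
    simp only [ContinuousLinearMap.sub_apply, ContinuousLinearMap.id_apply,
      ContinuousLinearEquiv.coe_coe, hv₂, mul_one] at h
    calc ‖v₂ - (B v₂ : Plane)‖
        ≤ ‖ContinuousLinearMap.id ℝ Plane - (B : Plane →L[ℝ] Plane)‖ := h
      _ ≤ δ / 20 := hA₁₂
  -- `A₁⁻¹` has norm at most 2 (pointwise)
  have hAinv : ∀ u : Plane, ‖(A₁.symm u : Plane)‖ ≤ 2 * ‖u‖ := by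
    intro u
    set w : Plane := A₁.symm u with hw
    have h1 : ‖w - (A₁ w : Plane)‖ ≤ (1 / 2) * ‖w‖ := by
      have h := ((A₁ : Plane →L[ℝ] Plane) - ContinuousLinearMap.id ℝ Plane).le_opNorm w
      simp only [ContinuousLinearMap.sub_apply, ContinuousLinearMap.id_apply,
        ContinuousLinearEquiv.coe_coe] at h
      calc ‖w - (A₁ w : Plane)‖ = ‖(A₁ w : Plane) - w‖ := norm_sub_rev _ _
        _ ≤ ‖(A₁ : Plane →L[ℝ] Plane) - ContinuousLinearMap.id ℝ Plane‖ * ‖w‖ := h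
        _ ≤ (1 / 2) * ‖w‖ := by
            apply mul_le_mul_of_nonneg_right hA₁ (norm_nonneg w)
    have h2 : (A₁ w : Plane) = u := by rw [hw]; exact A₁.apply_symm_apply u
    have h3 : ‖w‖ - ‖(A₁ w : Plane)‖ ≤ ‖w - (A₁ w : Plane)‖ := norm_sub_norm_le _ _
    rw [h2] at h1 h3
    linarith
  -- the key lower bound for rescaled unit vectors
  have hc : (inner ℝ v₁ v₂ : ℝ) ≤ 1 := by
    have h := real_inner_le_norm v₁ v₂
    rwa [hv₁, hv₂, one_mul] at h
  have hsq1 : ‖a • v₁ - b • v₂‖ ^ 2 = a ^ 2 + b ^ 2 - 2 * a * b * (inner ℝ v₁ v₂ : ℝ) := by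
    rw [norm_sub_sq_real, norm_smul, norm_smul, real_inner_smul_left, real_inner_smul_right,
      Real.norm_eq_abs, Real.norm_eq_abs, abs_of_pos (by linarith : (0:ℝ) < a),
      abs_of_pos (by linarith : (0:ℝ) < b), hv₁, hv₂]
    ring
  have hsq2 : ‖v₁ - v₂‖ ^ 2 = 2 - 2 * (inner ℝ v₁ v₂ : ℝ) := by
    rw [norm_sub_sq_real, hv₁, hv₂]; ring
  have step5 : 2 / 3 * δ ≤ ‖a • v₁ - b • v₂‖ := by
    have hδ2 : δ ^ 2 ≤ ‖v₁ - v₂‖ ^ 2 := by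
      apply pow_le_pow_left₀ (le_of_lt hδ) hlow
    rw [hsq2] at hδ2
    exact sep_aux _ δ a b _ (norm_nonneg _) hδ hsq1 hδ2 hc halb haub hblb hbub
  -- replace `v₂` by `B v₂` at cost `δ/10`
  have step4 : 17 / 30 * δ ≤ ‖a • v₁ - b • (B v₂ : Plane)‖ := by
    have hdiff : (a • v₁ - b • v₂) - (a • v₁ - b • (B v₂ : Plane))
        = b • ((B v₂ : Plane) - v₂) := by
      rw [smul_sub]; abel
    have h := norm_sub_norm_le (a • v₁ - b • v₂) (a • v₁ - b • (B v₂ : Plane))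
    rw [hdiff, norm_smul, Real.norm_eq_abs, abs_of_pos (by linarith : (0:ℝ) < b)] at h
    have hbd : b * ‖(B v₂ : Plane) - v₂‖ ≤ 2 * (δ / 20) := by
      rw [norm_sub_rev]
      apply mul_le_mul hbub hB (norm_nonneg _) (by norm_num)
    linarith
  -- pull back through `A₁`
  have hpull : (A₁.symm ((a • (A₁ v₁ : Plane)) - b • (A₂ v₂ : Plane)) : Plane)
      = a • v₁ - b • (B v₂ : Plane) := by
    rw [map_sub, map_smul, map_smul, A₁.symm_apply_apply]
    rfl
  have hfin := hAinv ((a • (A₁ v₁ : Plane)) - b • (A₂ v₂ : Plane))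
  rw [hpull] at hfin
  linarith
end
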